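/- If σ is a 4-fold twist preserving the cubic tessellation of ℝ³, then its axis is parallel to a coordinate axis and the norm of its translational component is a positive integer. -/

import Mathlib

noncomputable section
open scoped RealInnerProductSpace

abbrev E3 : Type := EuclideanSpace ℝ (Fin 3)

def vec (x y z : ℝ) : E3 := (WithLp.equiv 2 (Fin 3 → ℝ)).symm ![x, y, z]

/-- The vertex set of the cubic tessellation: the integer lattice ℤ³. -/
def latt : Set E3 := {p | ∀ i, ∃ n : ℤ, p i = (n : ℝ)}

/-- An isometry belongs to the symmetry group [4,3,4] of the cubic tessellation
iff it preserves the integer lattice. -/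
def PreservesLatt (f : E3 ≃ᵢ E3) : Prop := ∀ p : E3, p ∈ latt ↔ f p ∈ latt

/-- `f` is a rotation of order `n` about the line through `p` with direction `v`:
it fixes the line pointwise and has order `n` in the isometry group. -/
def IsRotationAbout (f : E3 ≃ᵢ E3) (p v : E3) (n : ℕ) : Prop :=
  v ≠ 0 ∧ (∀ t : ℝ, f (p + t • v) = p + t • v) ∧ orderOf f = n

/-- `f` is a twist (screw motion): the commuting product of a rotation `r` of order `n ≥ 2`
about the line through `p` in direction `v` with the translation by `w ≠ 0`, `w` parallel to `v`. -/
def IsTwist (f : E3 ≃ᵢ E3) (p v w : E3) (n : ℕ) : Prop :=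
  2 ≤ n ∧ w ≠ 0 ∧ (∃ s : ℝ, w = s • v) ∧
  ∃ r : E3 ≃ᵢ E3, IsRotationAbout r p v n ∧ (∀ x, f x = r x + w) ∧ (∀ x, r (x + w) = r x + w)

lemma inner_single_one (x : E3) (i : Fin 3) : ⟪x, EuclideanSpace.single i (1:ℝ)⟫ = x i := by
  simp [EuclideanSpace.inner_single_right]

lemma coord_eq (x y : E3)
    (h : ∀ j : Fin 3, ⟪x, EuclideanSpace.single j (1:ℝ)⟫ = ⟪y, EuclideanSpace.single j (1:ℝ)⟫) :
    x = y := by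
  ext j
  have := h j
  rwa [inner_single_one, inner_single_one] at this

lemma unit_latt (u : E3) (hu : u ∈ latt) (h1 : ‖u‖ = 1) :
    ∃ (i : Fin 3) (ε : ℝ), (ε = 1 ∨ ε = -1) ∧ u = ε • EuclideanSpace.single i (1:ℝ) := by
  obtain ⟨a, ha⟩ := hu 0
  obtain ⟨b, hb⟩ := hu 1
  obtain ⟨c, hc⟩ := hu 2
  have h2 : ⟪u, u⟫ = 1 := by rw [real_inner_self_eq_norm_sq, h1]; norm_num
  rw [PiLp.inner_apply] at h2
  simp only [RCLike.inner_apply, conj_trivial] at h2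
  rw [Fin.sum_univ_three, ha, hb, hc] at h2
  have hz : a * a + b * b + c * c = 1 := by exact_mod_cast h2
  have b1 : -1 ≤ a := by nlinarith
  have b2 : a ≤ 1 := by nlinarith
  have b3 : -1 ≤ b := by nlinarith
  have b4 : b ≤ 1 := by nlinarith
  have b5 : -1 ≤ c := by nlinarith
  have b6 : c ≤ 1 := by nlinarith
  interval_cases a <;> interval_cases b <;> interval_cases c <;>
    first
    | omega
    | (refine ⟨0, 1, Or.inl rfl, ?_⟩; ext j; fin_cases j <;> simp [ha, hb, hc, EuclideanSpace.single_apply, PiLp.smul_apply] <;> norm_num; done)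
    | (refine ⟨0, -1, Or.inr rfl, ?_⟩; ext j; fin_cases j <;> simp [ha, hb, hc, EuclideanSpace.single_apply, PiLp.smul_apply] <;> norm_num; done)
    | (refine ⟨1, 1, Or.inl rfl, ?_⟩; ext j; fin_cases j <;> simp [ha, hb, hc, EuclideanSpace.single_apply, PiLp.smul_apply] <;> norm_num; done)
    | (refine ⟨1, -1, Or.inr rfl, ?_⟩; ext j; fin_cases j <;> simp [ha, hb, hc, EuclideanSpace.single_apply, PiLp.smul_apply] <;> norm_num; done)
    | (refine ⟨2, 1, Or.inl rfl, ?_⟩; ext j; fin_cases j <;> simp [ha, hb, hc, EuclideanSpace.single_apply, PiLp.smul_apply] <;> norm_num; done)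
    | (refine ⟨2, -1, Or.inr rfl, ?_⟩; ext j; fin_cases j <;> simp [ha, hb, hc, EuclideanSpace.single_apply, PiLp.smul_apply] <;> norm_num; done)

/-- A 4-fold twist preserving the cubic tessellation has its axis parallel to a coordinate
axis, and the norm of its translational component is a positive integer. -/
theorem stmt3 (f : E3 ≃ᵢ E3) (p v w : E3)
    (hl : PreservesLatt f) (ht : IsTwist f p v w 4) :
    (∃ (i : Fin 3) (s : ℝ), s ≠ 0 ∧ v = s • EuclideanSpace.single i (1:ℝ)) ∧
    (∃ k : ℕ, 0 < k ∧ ‖w‖ = (k : ℝ)) := by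
  obtain ⟨-, hw0, ⟨s, hsv⟩, r, ⟨hvne, hfix, hord⟩, hfr, -⟩ := ht
  have hrp : r p = p := by simpa using hfix 0
  have h4 : r ^ 4 = 1 := by rw [← hord]; exact pow_orderOf_eq_one r
  have hr4 : ∀ x, r (r (r (r x))) = x := by
    intro x
    have : (r ^ 4) x = x := by rw [h4]; rfl
    simpa [pow_succ, IsometryEquiv.mul_apply] using this
  have hr2 : ∃ x, r (r x) ≠ x := by
    by_contra h; push_neg at h
    have h2 : r ^ 2 = 1 := IsometryEquiv.ext fun x => by
      simpa [pow_succ, IsometryEquiv.mul_apply] using h x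
    have := orderOf_dvd_of_pow_eq_one h2
    rw [hord] at this
    norm_num at this
  set g : E3 ≃ᵢ E3 := ((IsometryEquiv.addRight p).trans r).trans
      (IsometryEquiv.addRight p).symm with hgdef
  have hgapp : ∀ x, g x = r (x + p) - p := by
    intro x
    simp [hgdef, IsometryEquiv.trans_apply, sub_eq_add_neg]
  have hg0 : g 0 = 0 := by rw [hgapp]; simp [hrp]
  set A := g.toRealLinearIsometryEquivOfMapZero hg0 with hAdef
  have hA : ∀ x, A x = r (x + p) - p := by
    intro x
    rw [show (A x : E3) = g x from congrFun
      (IsometryEquiv.coe_toRealLinearIsometryEquivOfMapZero g hg0) x, hgapp]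
  have hAr : ∀ x, r x = A (x - p) + p := by
    intro x; rw [hA]; simp
  have hAv : A v = v := by
    have h1 := hfix 1
    rw [one_smul] at h1
    rw [hA, add_comm v p, h1]
    abel
  have hA4 : ∀ x, A (A (A (A x))) = x := by
    intro x
    have e1 : ∀ y, A (A y) = r (r (y + p)) - p := by
      intro y; rw [hA, hA, sub_add_cancel]
    rw [e1, e1, sub_add_cancel, hr4, add_sub_cancel_right]
  have hA2 : ∃ q, A (A q) ≠ q := by
    obtain ⟨x, hx⟩ := hr2
    refine ⟨x - p, fun h => hx ?_⟩
    have e1 : A (A (x - p)) = r (r x) - p := by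
      have e0 : A (x - p) = r x - p := by rw [hA, sub_add_cancel]
      rw [e0, hA, sub_add_cancel]
    rw [e1] at h
    have := congrArg (· + p) h
    simpa using this
  have key : ∀ q : E3, A q = f q - f 0 := by
    intro q
    rw [hfr, hfr]
    have e1 : r q + w - (r 0 + w) = r q - r 0 := by abel
    rw [e1, hAr q, hAr 0]
    have e2 : A (q - p) + p - (A (0 - p) + p) = A (q - p) - A (0 - p) := by abel
    rw [e2, ← A.map_sub]
    congr 1
    abel
  have h0latt : (0 : E3) ∈ latt := fun i => ⟨0, by simp⟩
  have hf0 : f 0 ∈ latt := (hl 0).1 h0latt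
  have hAlatt : ∀ q, q ∈ latt → A q ∈ latt := by
    intro q hq i
    obtain ⟨n1, hn1⟩ := ((hl q).1 hq) i
    obtain ⟨n2, hn2⟩ := hf0 i
    refine ⟨n1 - n2, ?_⟩
    rw [key q, PiLp.sub_apply, hn1, hn2]
    push_cast; ring
  have hsl : ∀ j : Fin 3, (EuclideanSpace.single j (1:ℝ)) ∈ latt := by
    intro j i
    by_cases h : i = j
    · exact ⟨1, by simp [EuclideanSpace.single_apply, h]⟩
    · exact ⟨0, by simp [EuclideanSpace.single_apply, h]⟩
  have hbn : ∀ j : Fin 3, ‖A (EuclideanSpace.single j (1:ℝ))‖ = 1 := by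
    intro j; rw [A.norm_map]; simp
  choose σ ε hεpm hAe using fun j => unit_latt _ (hAlatt _ (hsl j)) (hbn j)
  have hσinj : Function.Injective σ := by
    intro j k hjk
    by_contra hne
    have h1 : ⟪A (EuclideanSpace.single j (1:ℝ)), A (EuclideanSpace.single k (1:ℝ))⟫ = 0 := by
      rw [A.inner_map_map, EuclideanSpace.inner_single_left]
      simp [EuclideanSpace.single_apply, hne]
    rw [hAe j, hAe k, hjk, real_inner_smul_left, real_inner_smul_right, inner_single_one] at h1
    simp [EuclideanSpace.single_apply] at h1
    rcases hεpm j with h | h <;> rcases hεpm k with h' | h' <;> rw [h, h'] at h1 <;> norm_num at h1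
  have hvj : ∀ j, v j = ε j * v (σ j) := by
    intro j
    have h1 : ⟪v, EuclideanSpace.single j (1:ℝ)⟫
        = ⟪A v, A (EuclideanSpace.single j (1:ℝ))⟫ := (A.inner_map_map _ _).symm
    rw [hAv, hAe j, real_inner_smul_right, inner_single_one, inner_single_one] at h1
    exact h1
  have hA2basis : ¬ (∀ j : Fin 3,
      A (A (EuclideanSpace.single j (1:ℝ))) = EuclideanSpace.single j (1:ℝ)) := by
    intro hbas
    obtain ⟨q, hq⟩ := hA2
    apply hq
    apply coord_eq
    intro j
    calc ⟪A (A q), EuclideanSpace.single j (1:ℝ)⟫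
        = ⟪A (A q), A (A (EuclideanSpace.single j (1:ℝ)))⟫ := by rw [hbas j]
      _ = ⟪q, EuclideanSpace.single j (1:ℝ)⟫ := by rw [A.inner_map_map, A.inner_map_map]
  have hval : ∀ x : Fin 3, x = 0 ∨ x = 1 ∨ x = 2 := by decide
  have d01 : σ 0 ≠ σ 1 := fun h => absurd (hσinj h) (by decide)
  have d02 : σ 0 ≠ σ 2 := fun h => absurd (hσinj h) (by decide)
  have d12 : σ 1 ≠ σ 2 := fun h => absurd (hσinj h) (by decide)
  obtain ⟨i, hAei, hvine, hveq⟩ :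
      ∃ i : Fin 3, A (EuclideanSpace.single i (1:ℝ)) = EuclideanSpace.single i (1:ℝ) ∧
        v i ≠ 0 ∧ v = v i • EuclideanSpace.single i (1:ℝ) := by
    rcases hval (σ 0) with h0 | h0 | h0 <;> rcases hval (σ 1) with h1 | h1 | h1 <;>
      rcases hval (σ 2) with h2 | h2 | h2
    · exact absurd (h0.trans h1.symm) d01
    · exact absurd (h0.trans h1.symm) d01
    · exact absurd (h0.trans h1.symm) d01
    · exact absurd (h0.trans h2.symm) d02
    · exact absurd (h1.trans h2.symm) d12
    · -- identity permutation: contradiction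
      exfalso; apply hA2basis; intro j
      rcases hval j with rfl | rfl | rfl <;>
        simp only [hAe, h0, h1, h2, map_smul, smul_smul] <;>
        first
        | (rcases hεpm 0 with h | h <;> simp [h]; done)
        | (rcases hεpm 1 with h | h <;> simp [h]; done)
        | (rcases hεpm 2 with h | h <;> simp [h]; done)
    · exact absurd (h0.trans h2.symm) d02
    · -- transposition (1 2), fixes 0
      have hsq : ε 1 * ε 2 = 1 ∨ ε 1 * ε 2 = -1 := by
        rcases hεpm 1 with h | h <;> rcases hεpm 2 with h' | h' <;> rw [h, h'] <;> norm_num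
      have hprod : ε 1 * ε 2 = -1 := by
        rcases hsq with hp | hp
        · exfalso; apply hA2basis; intro j
          rcases hval j with rfl | rfl | rfl <;>
            simp only [hAe, h0, h1, h2, map_smul, smul_smul] <;>
            first
            | (rw [hp, one_smul]; done)
            | (rw [mul_comm (ε 2) (ε 1), hp, one_smul]; done)
            | (rcases hεpm 0 with h | h <;> simp [h]; done)
        · exact hp
      have hva : v 1 = 0 := by
        have e0 := hvj 1; rw [h1] at e0
        have e1 := hvj 2; rw [h2] at e1
        have e2 : v 1 = (ε 1 * ε 2) * v 1 := by rw [mul_assoc, ← e1]; exact e0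
        rw [hprod] at e2; linarith
      have hvb : v 2 = 0 := by
        have e1 := hvj 2; rw [h2, hva, mul_zero] at e1; exact e1
      have hvfix : v 0 ≠ 0 := by
        intro hz
        apply hvne
        ext j
        rcases hval j with rfl | rfl | rfl <;> simp [hva, hvb, hz, PiLp.zero_apply]
      have hεfix : ε 0 = 1 := by
        have e2 := hvj 0; rw [h0] at e2
        rcases hεpm 0 with h | h
        · exact h
        · exfalso; apply hvfix; rw [h] at e2; linarith
      refine ⟨0, ?_, hvfix, ?_⟩
      · rw [hAe 0, h0, hεfix, one_smul]
      · ext j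
        rcases hval j with rfl | rfl | rfl <;>
          simp [hva, hvb, PiLp.smul_apply, EuclideanSpace.single_apply]
    · exact absurd (h1.trans h2.symm) d12
    · exact absurd (h1.trans h2.symm) d12
    · exact absurd (h0.trans h2.symm) d02
    · -- transposition (0 1), fixes 2
      have hsq : ε 0 * ε 1 = 1 ∨ ε 0 * ε 1 = -1 := by
        rcases hεpm 0 with h | h <;> rcases hεpm 1 with h' | h' <;> rw [h, h'] <;> norm_num
      have hprod : ε 0 * ε 1 = -1 := by
        rcases hsq with hp | hp
        · exfalso; apply hA2basis; intro j
          rcases hval j with rfl | rfl | rfl <;>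
            simp only [hAe, h0, h1, h2, map_smul, smul_smul] <;>
            first
            | (rw [hp, one_smul]; done)
            | (rw [mul_comm (ε 1) (ε 0), hp, one_smul]; done)
            | (rcases hεpm 2 with h | h <;> simp [h]; done)
        · exact hp
      have hva : v 0 = 0 := by
        have e0 := hvj 0; rw [h0] at e0
        have e1 := hvj 1; rw [h1] at e1
        have e2 : v 0 = (ε 0 * ε 1) * v 0 := by rw [mul_assoc, ← e1]; exact e0
        rw [hprod] at e2; linarith
      have hvb : v 1 = 0 := by
        have e1 := hvj 1; rw [h1, hva, mul_zero] at e1; exact e1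
      have hvfix : v 2 ≠ 0 := by
        intro hz
        apply hvne
        ext j
        rcases hval j with rfl | rfl | rfl <;> simp [hva, hvb, hz, PiLp.zero_apply]
      have hεfix : ε 2 = 1 := by
        have e2 := hvj 2; rw [h2] at e2
        rcases hεpm 2 with h | h
        · exact h
        · exfalso; apply hvfix; rw [h] at e2; linarith
      refine ⟨2, ?_, hvfix, ?_⟩
      · rw [hAe 2, h2, hεfix, one_smul]
      · ext j
        rcases hval j with rfl | rfl | rfl <;>
          simp [hva, hvb, PiLp.smul_apply, EuclideanSpace.single_apply]
    · exact absurd (h0.trans h1.symm) d01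
    · exact absurd (h0.trans h1.symm) d01
    · exact absurd (h0.trans h1.symm) d01
    · -- 3-cycle: contradiction with A^4 = 1
      exfalso
      have h4e := hA4 (EuclideanSpace.single 0 (1:ℝ))
      simp only [hAe, h0, h1, h2, map_smul, smul_smul] at h4e
      have h00 := congrArg (fun z : E3 => z 0) h4e
      simp [PiLp.smul_apply, EuclideanSpace.single_apply] at h00
    · exact absurd (h0.trans h2.symm) d02
    · exact absurd (h1.trans h2.symm) d12
    · exact absurd (h1.trans h2.symm) d12
    · -- 3-cycle: contradiction with A^4 = 1
      exfalso
      have h4e := hA4 (EuclideanSpace.single 0 (1:ℝ))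
      simp only [hAe, h0, h1, h2, map_smul, smul_smul] at h4e
      have h00 := congrArg (fun z : E3 => z 0) h4e
      simp [PiLp.smul_apply, EuclideanSpace.single_apply] at h00
    · exact absurd (h0.trans h2.symm) d02
    · -- transposition (0 2), fixes 1
      have hsq : ε 0 * ε 2 = 1 ∨ ε 0 * ε 2 = -1 := by
        rcases hεpm 0 with h | h <;> rcases hεpm 2 with h' | h' <;> rw [h, h'] <;> norm_num
      have hprod : ε 0 * ε 2 = -1 := by
        rcases hsq with hp | hp
        · exfalso; apply hA2basis; intro j
          rcases hval j with rfl | rfl | rfl <;>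
            simp only [hAe, h0, h1, h2, map_smul, smul_smul] <;>
            first
            | (rw [hp, one_smul]; done)
            | (rw [mul_comm (ε 2) (ε 0), hp, one_smul]; done)
            | (rcases hεpm 1 with h | h <;> simp [h]; done)
        · exact hp
      have hva : v 0 = 0 := by
        have e0 := hvj 0; rw [h0] at e0
        have e1 := hvj 2; rw [h2] at e1
        have e2 : v 0 = (ε 0 * ε 2) * v 0 := by rw [mul_assoc, ← e1]; exact e0
        rw [hprod] at e2; linarith
      have hvb : v 2 = 0 := by
        have e1 := hvj 2; rw [h2, hva, mul_zero] at e1; exact e1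
      have hvfix : v 1 ≠ 0 := by
        intro hz
        apply hvne
        ext j
        rcases hval j with rfl | rfl | rfl <;> simp [hva, hvb, hz, PiLp.zero_apply]
      have hεfix : ε 1 = 1 := by
        have e2 := hvj 1; rw [h1] at e2
        rcases hεpm 1 with h | h
        · exact h
        · exfalso; apply hvfix; rw [h] at e2; linarith
      refine ⟨1, ?_, hvfix, ?_⟩
      · rw [hAe 1, h1, hεfix, one_smul]
      · ext j
        rcases hval j with rfl | rfl | rfl <;>
          simp [hva, hvb, PiLp.smul_apply, EuclideanSpace.single_apply]
    · exact absurd (h1.trans h2.symm) d12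
    · exact absurd (h0.trans h2.symm) d02
    · exact absurd (h0.trans h1.symm) d01
    · exact absurd (h0.trans h1.symm) d01
    · exact absurd (h0.trans h1.symm) d01
  refine ⟨⟨i, v i, hvine, hveq⟩, ?_⟩
  have hwE : w = (s * v i) • EuclideanSpace.single i (1:ℝ) := by
    rw [hsv]
    conv_lhs => rw [hveq]
    rw [smul_smul]
  have hcne : s * v i ≠ 0 := fun h => hw0 (by rw [hwE, h, zero_smul])
  have hwi : w i = s * v i := by
    rw [hwE]
    simp [PiLp.smul_apply, EuclideanSpace.single_apply]
  have hApi : (A (0 - p)) i = - p i := by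
    have h1 : ⟪A (0 - p), EuclideanSpace.single i (1:ℝ)⟫
        = ⟪(0:E3) - p, EuclideanSpace.single i (1:ℝ)⟫ := by
      conv_lhs => rw [← hAei]
      rw [A.inner_map_map]
    rw [inner_single_one, inner_single_one] at h1
    rw [h1, PiLp.sub_apply, PiLp.zero_apply, zero_sub]
  have hf0i : (f 0) i = w i := by
    rw [hfr 0, hAr 0, PiLp.add_apply, PiLp.add_apply, hApi]
    ring
  obtain ⟨n, hn⟩ := hf0 i
  have hcn : w i = (n : ℝ) := by rw [← hf0i, hn]
  have hnne : n ≠ 0 := by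
    intro h
    rw [h] at hcn
    apply hcne
    rw [← hwi, hcn]
    norm_num
  refine ⟨n.natAbs, Int.natAbs_pos.mpr hnne, ?_⟩
  rw [hwE, norm_smul, EuclideanSpace.norm_single, ← hwi, hcn, norm_one, mul_one,
    Real.norm_eq_abs, Nat.cast_natAbs]
  exact Int.cast_abs.symm
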